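/- Let D be a distance measure satisfying the data processing inequality (D(N(ρ), N(σ)) ≤ D(ρ,σ) for every channel N) and the triangle inequality, and suppose the free states on the composite system are ℱ_AB = conv{τ_A ⊗ τ_B : τ_A ∈ ℱ_A, τ_B ∈ ℱ_B}. Then for all states ρ₁ on system A and ρ₂ on system B, the induced resource measure satisfies max{ω_D(ρ₁), ω_D(ρ₂)} ≤ ω_D(ρ₁ ⊗ ρ₂) ≤ ω_D(ρ₁) + ω_D(ρ₂), where ω_D on each system is taken with respect to the corresponding free set. -/

import Mathlib

open scoped Kronecker ComplexOrder

variable {ι : Type*} [Fintype ι] [DecidableEq ι]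

/-- A quantum state: positive semidefinite matrix of trace one. -/
def IsState (ρ : Matrix ι ι ℂ) : Prop := ρ.PosSemidef ∧ ρ.trace = 1

/-- The action of `id_n ⊗ N` on block matrices. -/
def idTensorMap (n : ℕ) (N : Matrix ι ι ℂ →ₗ[ℂ] Matrix ι ι ℂ)
    (M : Matrix (Fin n × ι) (Fin n × ι) ℂ) : Matrix (Fin n × ι) (Fin n × ι) ℂ :=
  Matrix.of fun p q => N (Matrix.of fun k l => M (p.1, k) (q.1, l)) p.2 q.2

/-- A quantum channel: completely positive trace preserving linear map. -/
structure Channel (ι : Type*) [Fintype ι] [DecidableEq ι] where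
  map : Matrix ι ι ℂ →ₗ[ℂ] Matrix ι ι ℂ
  cp : ∀ (n : ℕ) (M : Matrix (Fin n × ι) (Fin n × ι) ℂ), M.PosSemidef →
        (idTensorMap n map M).PosSemidef
  tp : ∀ A : Matrix ι ι ℂ, (map A).trace = A.trace

/-- The positive semidefinite square root (the former `Matrix.PosSemidef.sqrt`). -/
noncomputable def posSemidefSqrt {M : Matrix ι ι ℂ} (hM : M.PosSemidef) : Matrix ι ι ℂ :=
  hM.1.eigenvectorUnitary.1 * Matrix.diagonal ((↑) ∘ (Real.sqrt ∘ hM.1.eigenvalues)) *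
  (star hM.1.eigenvectorUnitary : Matrix ι ι ℂ)

/-- The trace norm ‖A‖₁ = Tr √(AᴴA). -/
noncomputable def traceNorm (A : Matrix ι ι ℂ) : ℝ :=
  (posSemidefSqrt (Matrix.posSemidef_conjTranspose_mul_self A)).trace.re

/-- Trace-norm resource measure ω₁. -/
noncomputable def omega1 (F : Set (Matrix ι ι ℂ)) (ρ : Matrix ι ι ℂ) : ℝ :=
  (1/2) * sInf ((fun σ => traceNorm (ρ - σ)) '' F)

/-- Trace-norm resource generating power Ω₁. -/
noncomputable def genPower1 (F : Set (Matrix ι ι ℂ)) (N : Matrix ι ι ℂ → Matrix ι ι ℂ) : ℝ :=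
  sSup ((fun ρ => omega1 F (N ρ)) '' F)

/-- Trace-norm resource increasing power Ω̃₁. -/
noncomputable def incPower1 (F : Set (Matrix ι ι ℂ)) (N : Matrix ι ι ℂ → Matrix ι ι ℂ) : ℝ :=
  sSup ((fun ρ => omega1 F (N ρ) - omega1 F ρ) '' {ρ | IsState ρ})

/-- Holevo–Helstrom success probability of discriminating two channels with probe `ρ`. -/
noncomputable def psuccPair (N M : Matrix ι ι ℂ → Matrix ι ι ℂ) (ρ : Matrix ι ι ℂ) : ℝ :=
  1/2 + (1/4) * traceNorm (N ρ - M ρ)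

/-- Success probability of discriminating `N` from the set of channels `Free` with probe `ρ`. -/
noncomputable def psuccChan (N : Matrix ι ι ℂ → Matrix ι ι ℂ) (Free : Set (Channel ι))
    (ρ : Matrix ι ι ℂ) : ℝ :=
  sInf ((fun M : Channel ι => psuccPair N (⇑M.map) ρ) '' Free)

/-- Maximum success probability of discriminating `N` from `Free` using probes from `F`. -/
noncomputable def psuccFF (N : Matrix ι ι ℂ → Matrix ι ι ℂ) (Free : Set (Channel ι))
    (F : Set (Matrix ι ι ℂ)) : ℝ :=
  sSup ((fun ρ => psuccChan N Free ρ) '' F)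

/-- The action of `id_n ⊗ N` on block matrices, for a map between different systems. -/
def blockApply {ι κ : Type} [Fintype ι] [DecidableEq ι] [Fintype κ] [DecidableEq κ] (n : ℕ)
    (N : Matrix ι ι ℂ →ₗ[ℂ] Matrix κ κ ℂ)
    (M : Matrix (Fin n × ι) (Fin n × ι) ℂ) : Matrix (Fin n × κ) (Fin n × κ) ℂ :=
  Matrix.of fun p q => N (Matrix.of fun k l => M (p.1, k) (q.1, l)) p.2 q.2

/-- A quantum channel between (possibly different) systems: a completely positive trace
preserving linear map. -/
structure CPTPMap (ι κ : Type) [Fintype ι] [DecidableEq ι] [Fintype κ] [DecidableEq κ] where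
  map : Matrix ι ι ℂ →ₗ[ℂ] Matrix κ κ ℂ
  cp : ∀ (n : ℕ) (M : Matrix (Fin n × ι) (Fin n × ι) ℂ), M.PosSemidef →
        (blockApply n map M).PosSemidef
  tp : ∀ A : Matrix ι ι ℂ, (map A).trace = A.trace

section Aux

open Matrix

lemma my_kron_conjTranspose {ι κ : Type*} (A : Matrix ι ι ℂ) (B : Matrix κ κ ℂ) :
    (A ⊗ₖ B)ᴴ = Aᴴ ⊗ₖ Bᴴ := by
  ext ⟨i, j⟩ ⟨k, l⟩
  simp [conjTranspose_apply, mul_comm]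

lemma my_psd_kron {ι κ : Type*} [Fintype ι] [DecidableEq ι] [Fintype κ] [DecidableEq κ]
    {A : Matrix ι ι ℂ} {B : Matrix κ κ ℂ}
    (hA : A.PosSemidef) (hB : B.PosSemidef) : (A ⊗ₖ B).PosSemidef := by
  exact hA.kronecker hB

lemma my_isState_kron {ι κ : Type*} [Fintype ι] [DecidableEq ι] [Fintype κ] [DecidableEq κ]
    {A : Matrix ι ι ℂ} {B : Matrix κ κ ℂ}
    (hA : IsState A) (hB : IsState B) : IsState (A ⊗ₖ B) :=
  ⟨my_psd_kron hA.1 hB.1, by rw [Matrix.trace_kronecker, hA.2, hB.2, one_mul]⟩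

lemma my_real_smul {ι κ : Type*} (a : ℝ) (M : Matrix ι κ ℂ) : a • M = (a : ℂ) • M := by
  ext i j; simp [Complex.real_smul]

lemma my_psd_smul {ι : Type*} [Fintype ι] {M : Matrix ι ι ℂ} (hM : M.PosSemidef) {a : ℝ}
    (ha : 0 ≤ a) : (a • M).PosSemidef := by
  rw [my_real_smul]
  constructor
  · unfold Matrix.IsHermitian
    rw [conjTranspose_smul, hM.1]
    congr 1
    simp [Complex.star_def, Complex.conj_ofReal]
  · exact (Matrix.PosSemidef.smul hM (by exact_mod_cast ha : (0:ℂ) ≤ (a:ℂ))).2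

lemma my_isState_convex {ι : Type*} [Fintype ι] [DecidableEq ι] :
    Convex ℝ {ρ : Matrix ι ι ℂ | IsState ρ} := by
  intro x hx y hy a b ha hb hab
  refine ⟨(my_psd_smul hx.1 ha).add (my_psd_smul hy.1 hb), ?_⟩
  rw [Matrix.trace_add, my_real_smul, my_real_smul, Matrix.trace_smul, Matrix.trace_smul,
    hx.2, hy.2, smul_eq_mul, smul_eq_mul, mul_one, mul_one]
  exact_mod_cast hab

lemma my_psd_sum {ι κ : Type*} [Fintype ι] {s : Finset κ} {f : κ → Matrix ι ι ℂ}
    (h : ∀ i ∈ s, (f i).PosSemidef) : (∑ i ∈ s, f i).PosSemidef := by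
  classical
  induction s using Finset.induction with
  | empty => simpa using Matrix.PosSemidef.zero
  | insert a s hx ih =>
    rw [Finset.sum_insert hx]
    exact (h _ (Finset.mem_insert_self _ _)).add (ih fun i hi => h i (Finset.mem_insert_of_mem hi))

variable {A B : Type} [Fintype A] [DecidableEq A] [Fintype B] [DecidableEq B]

/-- partial trace over the second factor, as a linear map -/
noncomputable def ptrRlin (A B : Type) [Fintype A] [DecidableEq A] [Fintype B] [DecidableEq B] :
    Matrix (A × B) (A × B) ℂ →ₗ[ℂ] Matrix A A ℂ where
  toFun M := Matrix.of fun i j => ∑ k, M (i, k) (j, k)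
  map_add' M N := by ext i j; simp [Finset.sum_add_distrib]
  map_smul' c M := by ext i j; simp [Finset.mul_sum]

noncomputable def ptrLlin (A B : Type) [Fintype A] [DecidableEq A] [Fintype B] [DecidableEq B] :
    Matrix (A × B) (A × B) ℂ →ₗ[ℂ] Matrix B B ℂ where
  toFun M := Matrix.of fun i j => ∑ k, M (k, i) (k, j)
  map_add' M N := by ext i j; simp [Finset.sum_add_distrib]
  map_smul' c M := by ext i j; simp [Finset.mul_sum]

noncomputable def ptrR (A B : Type) [Fintype A] [DecidableEq A] [Fintype B] [DecidableEq B] :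
    CPTPMap (A × B) A where
  map := ptrRlin A B
  cp n M hM := by
    have : blockApply n (ptrRlin A B) M
        = ∑ k : B, M.submatrix (fun p : Fin n × A => (p.1, (p.2, k)))
            (fun p : Fin n × A => (p.1, (p.2, k))) := by
      ext p q
      simp [blockApply, ptrRlin, Matrix.sum_apply, Matrix.submatrix_apply]
    rw [this]
    exact my_psd_sum fun k _ => hM.submatrix _
  tp M := by
    simp [Matrix.trace, ptrRlin, Fintype.sum_prod_type]

noncomputable def ptrL (A B : Type) [Fintype A] [DecidableEq A] [Fintype B] [DecidableEq B] :
    CPTPMap (A × B) B where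
  map := ptrLlin A B
  cp n M hM := by
    have : blockApply n (ptrLlin A B) M
        = ∑ k : A, M.submatrix (fun p : Fin n × B => (p.1, (k, p.2)))
            (fun p : Fin n × B => (p.1, (k, p.2))) := by
      ext p q
      simp [blockApply, ptrLlin, Matrix.sum_apply, Matrix.submatrix_apply]
    rw [this]
    exact my_psd_sum fun k _ => hM.submatrix _
  tp M := by
    simp only [Matrix.trace, ptrLlin, Matrix.diag, LinearMap.coe_mk, AddHom.coe_mk,
      Matrix.of_apply, Fintype.sum_prod_type]
    exact Finset.sum_comm

noncomputable def tensRlin (σ : Matrix B B ℂ) :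
    Matrix A A ℂ →ₗ[ℂ] Matrix (A × B) (A × B) ℂ where
  toFun M := M ⊗ₖ σ
  map_add' M N := by simp [Matrix.add_kronecker]
  map_smul' c M := by simp [Matrix.smul_kronecker]

/-- tensoring on the right with a fixed state -/
noncomputable def tensR (σ : Matrix B B ℂ) (hσ : IsState σ) : CPTPMap A (A × B) where
  map := tensRlin σ
  cp n M hM := by
    have : blockApply n (tensRlin σ) M
        = (M ⊗ₖ σ).submatrix (fun p : Fin n × (A × B) => ((p.1, p.2.1), p.2.2))
            (fun p : Fin n × (A × B) => ((p.1, p.2.1), p.2.2)) := by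
      ext ⟨p, a, b⟩ ⟨q, a', b'⟩
      simp [blockApply, tensRlin, Matrix.submatrix_apply]
    rw [this]
    exact (my_psd_kron hM hσ.1).submatrix _
  tp M := by
    simp [tensRlin, Matrix.trace_kronecker, hσ.2]

noncomputable def tensLlin (σ : Matrix A A ℂ) :
    Matrix B B ℂ →ₗ[ℂ] Matrix (A × B) (A × B) ℂ where
  toFun M := σ ⊗ₖ M
  map_add' M N := by simp [Matrix.kronecker_add]
  map_smul' c M := by simp [Matrix.kronecker_smul]

/-- tensoring on the left with a fixed state -/
noncomputable def tensL (σ : Matrix A A ℂ) (hσ : IsState σ) : CPTPMap B (A × B) where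
  map := tensLlin σ
  cp n M hM := by
    have : blockApply n (tensLlin σ) M
        = (σ ⊗ₖ M).submatrix (fun p : Fin n × (A × B) => (p.2.1, (p.1, p.2.2)))
            (fun p : Fin n × (A × B) => (p.2.1, (p.1, p.2.2))) := by
      ext ⟨p, a, b⟩ ⟨q, a', b'⟩
      simp [blockApply, tensLlin, Matrix.submatrix_apply]
    rw [this]
    exact (my_psd_kron hσ.1 hM).submatrix _
  tp M := by
    simp [tensLlin, Matrix.trace_kronecker, hσ.2]

lemma ptrR_kron (a : Matrix A A ℂ) (b : Matrix B B ℂ) (hb : b.trace = 1) :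
    (ptrR A B).map (a ⊗ₖ b) = a := by
  ext i j
  simp only [ptrR, ptrRlin, LinearMap.coe_mk, AddHom.coe_mk, Matrix.of_apply,
    Matrix.kroneckerMap_apply]
  simp only [Matrix.trace, Matrix.diag] at hb
  rw [← Finset.mul_sum, hb, mul_one]

lemma ptrL_kron (a : Matrix A A ℂ) (b : Matrix B B ℂ) (ha : a.trace = 1) :
    (ptrL A B).map (a ⊗ₖ b) = b := by
  ext i j
  simp only [ptrL, ptrLlin, LinearMap.coe_mk, AddHom.coe_mk, Matrix.of_apply,
    Matrix.kroneckerMap_apply]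
  simp only [Matrix.trace, Matrix.diag] at ha
  rw [← Finset.sum_mul, ha, one_mul]

lemma my_map_real_smul {ι κ : Type*} [Fintype ι] [Fintype κ]
    (f : Matrix ι ι ℂ →ₗ[ℂ] Matrix κ κ ℂ) (a : ℝ) (M : Matrix ι ι ℂ) :
    f (a • M) = a • f M := by
  rw [my_real_smul, _root_.map_smul, ← my_real_smul]

end Aux

/-- for a contractive distance `D` satisfying the triangle inequality, and free
states of the composite system given by the convex hull of products of free states, one has
`max{ω_D(ρ₁), ω_D(ρ₂)} ≤ ω_D(ρ₁ ⊗ ρ₂) ≤ ω_D(ρ₁) + ω_D(ρ₂)`. -/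
theorem stmt19 {A B : Type} [Fintype A] [DecidableEq A] [Fintype B] [DecidableEq B]
    (D : ∀ (ι : Type) [Fintype ι] [DecidableEq ι], Matrix ι ι ℂ → Matrix ι ι ℂ → ℝ)
    (hDpos : ∀ (ι : Type) [Fintype ι] [DecidableEq ι] (ρ σ : Matrix ι ι ℂ),
      IsState ρ → IsState σ → 0 ≤ D ι ρ σ)
    (hDzero : ∀ (ι : Type) [Fintype ι] [DecidableEq ι] (ρ σ : Matrix ι ι ℂ),
      IsState ρ → IsState σ → (D ι ρ σ = 0 ↔ ρ = σ))
    (hDPI : ∀ (ι κ : Type) [Fintype ι] [DecidableEq ι] [Fintype κ] [DecidableEq κ]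
      (N : CPTPMap ι κ) (ρ σ : Matrix ι ι ℂ), IsState ρ → IsState σ →
      D κ (N.map ρ) (N.map σ) ≤ D ι ρ σ)
    (hTri : ∀ (ι : Type) [Fintype ι] [DecidableEq ι] (ρ σ τ : Matrix ι ι ℂ),
      IsState ρ → IsState σ → IsState τ → D ι ρ σ ≤ D ι ρ τ + D ι τ σ)
    (FA : Set (Matrix A A ℂ)) (hFAne : FA.Nonempty) (hFAstate : ∀ ρ ∈ FA, IsState ρ)
    (hFAconv : Convex ℝ FA) (hFAclosed : IsClosed FA)
    (FB : Set (Matrix B B ℂ)) (hFBne : FB.Nonempty) (hFBstate : ∀ ρ ∈ FB, IsState ρ)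
    (hFBconv : Convex ℝ FB) (hFBclosed : IsClosed FB)
    (ρ₁ : Matrix A A ℂ) (hρ₁ : IsState ρ₁) (ρ₂ : Matrix B B ℂ) (hρ₂ : IsState ρ₂) :
    max (sInf ((fun σ => D A ρ₁ σ) '' FA)) (sInf ((fun σ => D B ρ₂ σ) '' FB))
        ≤ sInf ((fun σ => D (A × B) (ρ₁ ⊗ₖ ρ₂) σ) ''
            (convexHull ℝ {ρ : Matrix (A × B) (A × B) ℂ | ∃ a ∈ FA, ∃ b ∈ FB, ρ = a ⊗ₖ b})) ∧
    sInf ((fun σ => D (A × B) (ρ₁ ⊗ₖ ρ₂) σ) ''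
        (convexHull ℝ {ρ : Matrix (A × B) (A × B) ℂ | ∃ a ∈ FA, ∃ b ∈ FB, ρ = a ⊗ₖ b}))
      ≤ sInf ((fun σ => D A ρ₁ σ) '' FA) + sInf ((fun σ => D B ρ₂ σ) '' FB) := by
  classical
  set P : Set (Matrix (A × B) (A × B) ℂ) :=
    {ρ : Matrix (A × B) (A × B) ℂ | ∃ a ∈ FA, ∃ b ∈ FB, ρ = a ⊗ₖ b} with hP
  set T : Set (Matrix (A × B) (A × B) ℂ) :=
    {σ | IsState σ ∧ (ptrR A B).map σ ∈ FA ∧ (ptrL A B).map σ ∈ FB} with hT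
  have hTconv : Convex ℝ T := by
    rintro x ⟨hxs, hxA, hxB⟩ y ⟨hys, hyA, hyB⟩ a b ha hb hab
    refine ⟨my_isState_convex hxs hys ha hb hab, ?_, ?_⟩
    · rw [map_add, my_map_real_smul, my_map_real_smul]
      exact hFAconv hxA hyA ha hb hab
    · rw [map_add, my_map_real_smul, my_map_real_smul]
      exact hFBconv hxB hyB ha hb hab
  have hPT : P ⊆ T := by
    rintro _ ⟨a, ha, b, hb, rfl⟩
    exact ⟨my_isState_kron (hFAstate a ha) (hFBstate b hb),
      by rw [ptrR_kron a b (hFBstate b hb).2]; exact ha,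
      by rw [ptrL_kron a b (hFAstate a ha).2]; exact hb⟩
  have hhullT : convexHull ℝ P ⊆ T := convexHull_min hPT hTconv
  obtain ⟨a₀, ha₀⟩ := hFAne
  obtain ⟨b₀, hb₀⟩ := hFBne
  have hPne : (convexHull ℝ P).Nonempty := ⟨a₀ ⊗ₖ b₀, subset_convexHull ℝ P ⟨a₀, ha₀, b₀, hb₀, rfl⟩⟩
  have hρ₁₂ : IsState (ρ₁ ⊗ₖ ρ₂) := my_isState_kron hρ₁ hρ₂
  have hneA : ((fun σ => D A ρ₁ σ) '' FA).Nonempty := ⟨_, a₀, ha₀, rfl⟩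
  have hneB : ((fun σ => D B ρ₂ σ) '' FB).Nonempty := ⟨_, b₀, hb₀, rfl⟩
  have hneH : ((fun σ => D (A × B) (ρ₁ ⊗ₖ ρ₂) σ) '' convexHull ℝ P).Nonempty :=
    hPne.image _
  have hbddA : BddBelow ((fun σ => D A ρ₁ σ) '' FA) :=
    ⟨0, by rintro _ ⟨σ, hσ, rfl⟩; exact hDpos A ρ₁ σ hρ₁ (hFAstate σ hσ)⟩
  have hbddB : BddBelow ((fun σ => D B ρ₂ σ) '' FB) :=
    ⟨0, by rintro _ ⟨σ, hσ, rfl⟩; exact hDpos B ρ₂ σ hρ₂ (hFBstate σ hσ)⟩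
  have hbddH : BddBelow ((fun σ => D (A × B) (ρ₁ ⊗ₖ ρ₂) σ) '' convexHull ℝ P) :=
    ⟨0, by rintro _ ⟨σ, hσ, rfl⟩; exact hDpos (A × B) _ σ hρ₁₂ (hhullT hσ).1⟩
  constructor
  · refine max_le (le_csInf hneH ?_) (le_csInf hneH ?_)
    · rintro _ ⟨σ, hσ, rfl⟩
      obtain ⟨hσs, hσA, hσB⟩ := hhullT hσ
      calc sInf ((fun σ => D A ρ₁ σ) '' FA)
          ≤ D A ρ₁ ((ptrR A B).map σ) := csInf_le hbddA ⟨_, hσA, rfl⟩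
        _ = D A ((ptrR A B).map (ρ₁ ⊗ₖ ρ₂)) ((ptrR A B).map σ) := by
            rw [ptrR_kron ρ₁ ρ₂ hρ₂.2]
        _ ≤ D (A × B) (ρ₁ ⊗ₖ ρ₂) σ := hDPI (A × B) A (ptrR A B) _ _ hρ₁₂ hσs
    · rintro _ ⟨σ, hσ, rfl⟩
      obtain ⟨hσs, hσA, hσB⟩ := hhullT hσ
      calc sInf ((fun σ => D B ρ₂ σ) '' FB)
          ≤ D B ρ₂ ((ptrL A B).map σ) := csInf_le hbddB ⟨_, hσB, rfl⟩
        _ = D B ((ptrL A B).map (ρ₁ ⊗ₖ ρ₂)) ((ptrL A B).map σ) := by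
            rw [ptrL_kron ρ₁ ρ₂ hρ₁.2]
        _ ≤ D (A × B) (ρ₁ ⊗ₖ ρ₂) σ := hDPI (A × B) B (ptrL A B) _ _ hρ₁₂ hσs
  · have key : ∀ a ∈ FA, ∀ b ∈ FB,
        sInf ((fun σ => D (A × B) (ρ₁ ⊗ₖ ρ₂) σ) '' convexHull ℝ P)
          ≤ D A ρ₁ a + D B ρ₂ b := by
      intro a ha b hb
      have hsa : IsState a := hFAstate a ha
      have hsb : IsState b := hFBstate b hb
      have h1 : D (A × B) (ρ₁ ⊗ₖ ρ₂) (a ⊗ₖ ρ₂) ≤ D A ρ₁ a := by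
        have := hDPI A (A × B) (tensR ρ₂ hρ₂) ρ₁ a hρ₁ hsa
        simpa [tensR, tensRlin] using this
      have h2 : D (A × B) (a ⊗ₖ ρ₂) (a ⊗ₖ b) ≤ D B ρ₂ b := by
        have := hDPI B (A × B) (tensL a hsa) ρ₂ b hρ₂ hsb
        simpa [tensL, tensLlin] using this
      calc sInf ((fun σ => D (A × B) (ρ₁ ⊗ₖ ρ₂) σ) '' convexHull ℝ P)
          ≤ D (A × B) (ρ₁ ⊗ₖ ρ₂) (a ⊗ₖ b) :=
            csInf_le hbddH ⟨_, subset_convexHull ℝ P ⟨a, ha, b, hb, rfl⟩, rfl⟩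
        _ ≤ D (A × B) (ρ₁ ⊗ₖ ρ₂) (a ⊗ₖ ρ₂) + D (A × B) (a ⊗ₖ ρ₂) (a ⊗ₖ b) :=
            hTri (A × B) _ _ _ hρ₁₂ (my_isState_kron hsa hsb) (my_isState_kron hsa hρ₂)
        _ ≤ D A ρ₁ a + D B ρ₂ b := add_le_add h1 h2
    have step : ∀ a ∈ FA,
        sInf ((fun σ => D (A × B) (ρ₁ ⊗ₖ ρ₂) σ) '' convexHull ℝ P)
          - sInf ((fun σ => D B ρ₂ σ) '' FB) ≤ D A ρ₁ a := by
      intro a ha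
      have : sInf ((fun σ => D (A × B) (ρ₁ ⊗ₖ ρ₂) σ) '' convexHull ℝ P) - D A ρ₁ a
          ≤ sInf ((fun σ => D B ρ₂ σ) '' FB) := by
        refine le_csInf hneB ?_
        rintro _ ⟨b, hb, rfl⟩
        linarith [key a ha b hb]
      linarith
    have : sInf ((fun σ => D (A × B) (ρ₁ ⊗ₖ ρ₂) σ) '' convexHull ℝ P)
        - sInf ((fun σ => D B ρ₂ σ) '' FB) ≤ sInf ((fun σ => D A ρ₁ σ) '' FA) := by
      refine le_csInf hneA ?_
      rintro _ ⟨a, ha, rfl⟩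
      exact step a ha
    linarith
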